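/- If every connected component C_k of V \ S in the n-dimensional hypercube satisfies |C_k| ≤ 2^{n-1}, then |S| ≥ (1/n^2)·(2^n − |S|); consequently if |S| < 2^n/(n^2+1) some component exceeds 2^{n-1}. -/

import Mathlib

open scoped Classical


/-- Flip coordinate `i` of a vertex of the hypercube `{0,1}^n`. -/
def flipAt (n : ℕ) (s : Fin n → Bool) (i : Fin n) : Fin n → Bool :=
  Function.update s i (!(s i))

/-- The `n`-dimensional hypercube graph on `{0,1}^n`: two vertices are
adjacent iff they differ in exactly one coordinate. -/
def cube (n : ℕ) : SimpleGraph (Fin n → Bool) :=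
  SimpleGraph.fromRel (fun s t => ∃ i, t = flipAt n s i)

/-- `C` is a connected component of the induced subgraph of the hypercube on `A`:
a maximal connected subset of `A`. -/
def IsCompOf (n : ℕ) (A C : Set (Fin n → Bool)) : Prop :=
  C.Nonempty ∧ C ⊆ A ∧ ((cube n).induce C).Connected ∧
    ∀ D, C ⊆ D → D ⊆ A → ((cube n).induce D).Connected → D = C

lemma flipAt_apply_self (n : ℕ) (s : Fin n → Bool) (i : Fin n) :
    flipAt n s i i = !(s i) := by simp [flipAt]

lemma flipAt_apply_ne (n : ℕ) (s : Fin n → Bool) {i j : Fin n} (h : j ≠ i) :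
    flipAt n s i j = s j := by simp [flipAt, Function.update_of_ne h]

lemma flipAt_flipAt (n : ℕ) (s : Fin n → Bool) (i : Fin n) :
    flipAt n (flipAt n s i) i = s := by
  funext j
  by_cases h : j = i
  · subst h; simp [flipAt_apply_self]
  · rw [flipAt_apply_ne n _ h, flipAt_apply_ne n _ h]

lemma flipAt_ne (n : ℕ) (s : Fin n → Bool) (i : Fin n) : s ≠ flipAt n s i := by
  intro h
  have := congrFun h i
  rw [flipAt_apply_self] at this
  simp at this

lemma cube_adj {n : ℕ} {s t : Fin n → Bool} :
    (cube n).Adj s t ↔ ∃ i, t = flipAt n s i := by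
  constructor
  · rintro ⟨hne, h | h⟩
    · exact h
    · obtain ⟨i, hi⟩ := h
      exact ⟨i, by rw [hi, flipAt_flipAt]⟩
  · rintro ⟨i, hi⟩
    exact ⟨hi ▸ flipAt_ne n s i, Or.inl ⟨i, hi⟩⟩

/-- `x` and `y` are joined by a walk in the cube staying inside `A`. -/
def Linked (n : ℕ) (A : Set (Fin n → Bool)) (x y : Fin n → Bool) : Prop :=
  ∃ p : (cube n).Walk x y, ∀ z ∈ p.support, z ∈ A

/-- the connected component of `u` inside `Sᶜ`. -/
def comp (n : ℕ) (S : Set (Fin n → Bool)) (u : Fin n → Bool) : Set (Fin n → Bool) :=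
  {w | Linked n Sᶜ u w}

lemma Linked.mem_right {n A x y} (h : Linked n A x y) : y ∈ A := by
  obtain ⟨p, hp⟩ := h; exact hp _ p.end_mem_support

lemma Linked.mem_left {n A x y} (h : Linked n A x y) : x ∈ A := by
  obtain ⟨p, hp⟩ := h; exact hp _ p.start_mem_support

lemma Linked.refl {n A x} (hx : x ∈ A) : Linked n A x x :=
  ⟨SimpleGraph.Walk.nil, by simp [hx]⟩

lemma Linked.symm {n A x y} (h : Linked n A x y) : Linked n A y x := by
  obtain ⟨p, hp⟩ := h
  exact ⟨p.reverse, by simpa using hp⟩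

lemma Linked.trans {n A x y z} (h : Linked n A x y) (h' : Linked n A y z) :
    Linked n A x z := by
  obtain ⟨p, hp⟩ := h
  obtain ⟨q, hq⟩ := h'
  refine ⟨p.append q, ?_⟩
  intro w hw
  rcases (SimpleGraph.Walk.mem_support_append_iff _ _).1 hw with h | h
  · exact hp _ h
  · exact hq _ h

lemma Linked.step {n A x y z} (h : Linked n A x y) (hadj : (cube n).Adj y z)
    (hz : z ∈ A) : Linked n A x z :=
  h.trans ⟨hadj.toWalk, by
    intro w hw
    simp [SimpleGraph.Walk.support_cons] at hw
    rcases hw with rfl | rfl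
    · exact h.mem_right
    · exact hz⟩

lemma Linked.of_mem_support {n A x y} (p : (cube n).Walk x y)
    (hp : ∀ z ∈ p.support, z ∈ A) {z} (hz : z ∈ p.support) : Linked n A x z := by
  classical
  refine ⟨p.takeUntil z hz, ?_⟩
  intro w hw
  exact hp _ (p.support_takeUntil_subset hz hw)

lemma mem_comp_self {n S u} (hu : u ∉ S) : u ∈ comp n S u := Linked.refl hu

lemma comp_subset {n S u} : comp n S u ⊆ Sᶜ := fun _ h => h.mem_right

/-- a general helper: a set all of whose pairs are joined by walks inside it
induces a connected subgraph. -/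
lemma induce_connected_of_walks {W : Type*} {G : SimpleGraph W} {C : Set W}
    (hne : C.Nonempty)
    (h : ∀ x ∈ C, ∀ y ∈ C, ∃ p : G.Walk x y, ∀ z ∈ p.support, z ∈ C) :
    (G.induce C).Connected := by
  have key : ∀ {x y : W} (p : G.Walk x y), (∀ z ∈ p.support, z ∈ C) →
      ∀ (hx : x ∈ C) (hy : y ∈ C), (G.induce C).Reachable ⟨x, hx⟩ ⟨y, hy⟩ := by
    intro x y p
    induction p with
    | nil => intro _ hx hy; exact SimpleGraph.Reachable.refl _
    | @cons a b c hab p ih =>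
      intro hsup hx hy
      have hb : b ∈ C := hsup _ (by simp [SimpleGraph.Walk.support_cons])
      have hsup' : ∀ z ∈ p.support, z ∈ C := fun z hz =>
        hsup _ (by simp [SimpleGraph.Walk.support_cons, hz])
      have hadj : (G.induce C).Adj ⟨a, hx⟩ ⟨b, hb⟩ := by
        simpa using hab
      exact hadj.reachable.trans (ih hsup' hb hy)
  rw [SimpleGraph.connected_iff]
  refine ⟨?_, ⟨⟨hne.choose, hne.choose_spec⟩⟩⟩
  rintro ⟨x, hx⟩ ⟨y, hy⟩
  obtain ⟨p, hp⟩ := h x hx y hy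
  exact key p hp hx hy

lemma linked_of_induce_connected {n : ℕ} {D : Set (Fin n → Bool)}
    (hconn : ((cube n).induce D).Connected) {x y : Fin n → Bool}
    (hx : x ∈ D) (hy : y ∈ D) : Linked n D x y := by
  obtain ⟨p⟩ := hconn.preconnected ⟨x, hx⟩ ⟨y, hy⟩
  refine ⟨p.map (SimpleGraph.Embedding.induce D).toHom, ?_⟩
  intro z hz
  change z ∈ (p.map (SimpleGraph.Embedding.induce D).toHom).support at hz
  rw [SimpleGraph.Walk.support_map, List.mem_map] at hz
  obtain ⟨⟨w, hw⟩, _, rfl⟩ := hz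
  exact hw

lemma comp_isCompOf {n : ℕ} {S : Set (Fin n → Bool)} {u : Fin n → Bool}
    (hu : u ∉ S) : IsCompOf n Sᶜ (comp n S u) := by
  refine ⟨⟨u, mem_comp_self hu⟩, comp_subset, ?_, ?_⟩
  · refine induce_connected_of_walks ⟨u, mem_comp_self hu⟩ ?_
    intro x hx y hy
    have hxy : Linked n Sᶜ x y := (Linked.symm hx).trans hy
    obtain ⟨p, hp⟩ := hxy
    refine ⟨p, ?_⟩
    intro z hz
    exact hx.trans (Linked.of_mem_support p hp hz)
  · intro D hCD hDS hconn
    apply Set.Subset.antisymm _ hCD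
    intro d hd
    have huD : u ∈ D := hCD (mem_comp_self hu)
    have : Linked n D u d := linked_of_induce_connected hconn huD hd
    obtain ⟨p, hp⟩ := this
    exact ⟨p, fun z hz => hDS (hp z hz)⟩

/-- interpolation along the canonical path: take `v`'s coordinates below `k`,
`u`'s coordinates from `k` on. -/
def interp (n : ℕ) (u v : Fin n → Bool) (k : ℕ) : Fin n → Bool :=
  fun j => if (j : ℕ) < k then v j else u j

lemma interp_zero (n : ℕ) (u v : Fin n → Bool) : interp n u v 0 = u := by
  funext j; simp [interp]

lemma interp_of_ge (n : ℕ) (u v : Fin n → Bool) {k : ℕ} (hk : n ≤ k) :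
    interp n u v k = v := by
  funext j; simp [interp, lt_of_lt_of_le j.isLt hk]

/-- the index just before the canonical path from `u` to `v` first leaves
the component of `u`. -/
noncomputable def cross (n : ℕ) (S : Set (Fin n → Bool)) (u v : Fin n → Bool) : ℕ :=
  if h : ∃ m, interp n u v m ∉ comp n S u then Nat.find h - 1 else 0

lemma cross_spec {n : ℕ} {S : Set (Fin n → Bool)} {u v : Fin n → Bool}
    (hu : u ∉ S) (hv : v ∉ comp n S u) :
    cross n S u v < n ∧ interp n u v (cross n S u v) ∈ comp n S u ∧
      interp n u v (cross n S u v + 1) ∉ comp n S u := by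
  have hvn : interp n u v n ∉ comp n S u := by
    rw [interp_of_ge n u v le_rfl]; exact hv
  have hex : ∃ m, interp n u v m ∉ comp n S u := ⟨n, hvn⟩
  have hcross : cross n S u v = Nat.find hex - 1 := dif_pos hex
  have hk1 : 1 ≤ Nat.find hex := by
    by_contra hc
    have h0 : Nat.find hex = 0 := by omega
    have := Nat.find_spec hex
    rw [h0, interp_zero] at this
    exact this (mem_comp_self hu)
  have hkn : Nat.find hex ≤ n := Nat.find_le hvn
  refine ⟨by omega, ?_, ?_⟩
  · rw [hcross]
    by_contra hc
    exact absurd hc (by simpa using Nat.find_min hex (m := Nat.find hex - 1) (by omega))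
  · rw [hcross]
    have : Nat.find hex - 1 + 1 = Nat.find hex := by omega
    rw [this]
    exact Nat.find_spec hex

lemma cross_props {n : ℕ} {S : Set (Fin n → Bool)} {u v : Fin n → Bool}
    (hu : u ∉ S) (hv : v ∉ comp n S u) :
    ∃ hmn : cross n S u v < n,
      interp n u v (cross n S u v) ∉ S ∧
      v ⟨cross n S u v, hmn⟩ = !(u ⟨cross n S u v, hmn⟩) ∧
      flipAt n (interp n u v (cross n S u v)) ⟨cross n S u v, hmn⟩ ∈ S := by
  obtain ⟨hmn, hmem, hnot⟩ := cross_spec hu hv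
  set m := cross n S u v with hm
  set i : Fin n := ⟨m, hmn⟩ with hi
  set w := interp n u v m with hw
  have hwi : w i = u i := by
    simp [hw, interp, hi]
  have hne : v i = !(u i) := by
    by_contra hc
    have huv : u i = v i := by
      cases hvi : v i <;> cases hui : u i <;> simp_all
    have : interp n u v (m + 1) = interp n u v m := by
      funext j
      simp only [interp]
      by_cases h1 : (j : ℕ) < m
      · simp [h1, Nat.lt_succ_of_lt h1]
      · by_cases h2 : (j : ℕ) = m
        · have : j = i := Fin.ext h2
          subst this
          simp [h1, h2, huv]
        · have : ¬ (j : ℕ) < m + 1 := by omega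
          simp [h1, this]
    rw [this] at hnot
    exact hnot hmem
  have hflip : interp n u v (m + 1) = flipAt n w i := by
    funext j
    by_cases h2 : j = i
    · rw [h2]
      have hlt : (i : ℕ) < m + 1 := by simp [hi]
      simp only [interp, hlt, if_pos, flipAt_apply_self, hwi, hne]
    · have h3 : (j : ℕ) ≠ m := fun hc => h2 (Fin.ext hc)
      rw [flipAt_apply_ne n _ h2]
      simp only [interp, hw]
      by_cases h1 : (j : ℕ) < m
      · simp [h1, Nat.lt_succ_of_lt h1]
      · have : ¬ (j : ℕ) < m + 1 := by omega
        simp [h1, this]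
  have hwS : w ∉ S := comp_subset hmem
  refine ⟨hmn, hwS, hne, ?_⟩
  by_contra hc
  have hadj : (cube n).Adj w (flipAt n w i) := cube_adj.2 ⟨i, rfl⟩
  have : flipAt n w i ∈ comp n S u := Linked.step (n := n) (A := Sᶜ) (x := u) hmem hadj hc
  rw [← hflip] at this
  exact hnot this

open Finset in
lemma count {n : ℕ} (hn : 1 ≤ n) {S : Set (Fin n → Bool)}
    (h : ∀ u, u ∉ S → (comp n S u).ncard ≤ 2 ^ (n - 1)) :
    2 ^ n ≤ S.ncard + 2 * n * S.ncard := by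
  classical
  have hV : Fintype.card (Fin n → Bool) = 2 ^ n := by simp
  set Tc : Finset (Fin n → Bool) := univ.filter (· ∉ S) with hTc
  set P : Finset ((Fin n → Bool) × (Fin n → Bool)) :=
    univ.filter (fun p => p.1 ∉ S ∧ p.2 ∉ comp n S p.1) with hP
  set Q : Finset ((Fin n → Bool) × Fin n × (Fin n → Bool)) :=
    univ.filter (fun q => q.1 ∉ S ∧ flipAt n q.1 q.2.1 ∈ S) with hQ
  -- (A) lower bound for P.card
  have hPbiUnion : P = Tc.biUnion (fun u => {u} ×ˢ
      (univ.filter (fun v => v ∉ comp n S u))) := by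
    ext p
    simp only [hP, hTc, mem_filter, mem_univ, true_and, mem_biUnion, mem_product,
      mem_singleton]
    constructor
    · rintro ⟨h1, h2⟩
      exact ⟨p.1, h1, rfl, by simpa using h2⟩
    · rintro ⟨u, hu, rfl, h2⟩
      exact ⟨hu, by simpa using h2⟩
  have hA : 2 ^ (n - 1) * Tc.card ≤ P.card := by
    rw [hPbiUnion, card_biUnion]
    · calc 2 ^ (n - 1) * Tc.card = ∑ _u ∈ Tc, 2 ^ (n - 1) := by
            rw [sum_const, smul_eq_mul, mul_comm]
        _ ≤ _ := by
            apply sum_le_sum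
            intro u hu
            rw [card_product, card_singleton, one_mul]
            have hcompl : univ.filter (fun v => v ∉ comp n S u)
                = (comp n S u).toFinsetᶜ := by
              ext v; simp
            rw [hcompl, card_compl, hV, ← Set.ncard_eq_toFinset_card']
            have hu' : u ∉ S := by simpa [hTc] using hu
            have := h u hu'
            have h2n : 2 ^ n = 2 ^ (n - 1) * 2 := by
              rw [← pow_succ]; congr 1; omega
            omega
    · intro u _ u' _ huu'
      simp only [Function.onFun]
      rw [Finset.disjoint_left]
      rintro p hp hp'
      rw [mem_product, mem_singleton] at hp hp'
      exact huu' (hp.1 ▸ hp'.1 ▸ rfl)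
  -- (B) injection from P into Q
  have hB : P.card ≤ Q.card := by
    apply Finset.card_le_card_of_injOn (fun p =>
      (interp n p.1 p.2 (cross n S p.1 p.2),
       if hc : cross n S p.1 p.2 < n then ⟨cross n S p.1 p.2, hc⟩ else (⟨0, hn⟩ : Fin n),
       fun j : Fin n => if (j : ℕ) < cross n S p.1 p.2 then p.1 j else p.2 j))
    · rintro ⟨u, v⟩ hp
      rw [hP, mem_coe, mem_filter] at hp
      obtain ⟨-, hu, hv⟩ := hp
      obtain ⟨hmn, hwS, hne, hflip⟩ := cross_props hu hv
      rw [hQ, mem_coe, mem_filter]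
      refine ⟨mem_univ _, ?_⟩
      simp only [dif_pos hmn]
      exact ⟨hwS, hflip⟩
    · rintro ⟨u₁, v₁⟩ hp₁ ⟨u₂, v₂⟩ hp₂ heq
      rw [coe_filter] at hp₁ hp₂
      obtain ⟨-, hu₁, hv₁⟩ := hp₁
      obtain ⟨-, hu₂, hv₂⟩ := hp₂
      have hu₁' : u₁ ∉ S := hu₁
      have hv₁' : v₁ ∉ comp n S u₁ := hv₁
      have hu₂' : u₂ ∉ S := hu₂
      have hv₂' : v₂ ∉ comp n S u₂ := hv₂
      obtain ⟨hmn₁, -, hne₁, -⟩ := cross_props hu₁' hv₁'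
      obtain ⟨hmn₂, -, hne₂, -⟩ := cross_props hu₂' hv₂'
      simp only [Prod.mk.injEq, dif_pos hmn₁, dif_pos hmn₂, Fin.mk.injEq] at heq
      obtain ⟨hw, hm, hg⟩ := heq
      rw [← hm] at hw hg
      have hieq : (⟨cross n S u₂ v₂, hmn₂⟩ : Fin n)
          = ⟨cross n S u₁ v₁, hmn₁⟩ := Fin.ext hm.symm
      rw [hieq] at hne₂
      have hu : u₁ = u₂ := by
        funext j
        by_cases hj : (j : ℕ) < cross n S u₁ v₁
        · have := congrFun hg j
          simpa [if_pos hj] using this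
        · have := congrFun hw j
          simpa [interp, if_neg hj] using this
      have hv : v₁ = v₂ := by
        funext j
        rcases lt_trichotomy ((j : ℕ)) (cross n S u₁ v₁) with hj | hj | hj
        · have := congrFun hw j
          simpa [interp, if_pos hj] using this
        · have hji : j = (⟨cross n S u₁ v₁, hmn₁⟩ : Fin n) := Fin.ext hj
          have hj' : ¬ (j : ℕ) < cross n S u₁ v₁ := by omega
          have huj := congrFun hw j
          simp only [interp, if_neg hj'] at huj
          rw [hji] at huj ⊢
          rw [hne₁, hne₂, huj]
        · have := congrFun hg j
          have hj' : ¬ (j : ℕ) < cross n S u₁ v₁ := by omega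
          simpa [if_neg hj'] using this
      rw [Prod.mk.injEq]
      exact ⟨hu, hv⟩
  -- (C) upper bound for Q.card
  have hC : Q.card ≤ S.ncard * (n * 2 ^ n) := by
    have := Finset.card_le_card_of_injOn
      (fun q : (Fin n → Bool) × Fin n × (Fin n → Bool) =>
        (flipAt n q.1 q.2.1, q.2.1, q.2.2))
      (s := Q) (t := S.toFinset ×ˢ (univ : Finset (Fin n)) ×ˢ univ)
      (by
        rintro ⟨w, i, g⟩ hq
        rw [hQ, mem_coe, mem_filter] at hq
        simp only [mem_coe, mem_product, mem_univ, and_true, Set.mem_toFinset]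
        exact hq.2.2)
      (by
        rintro ⟨w₁, i₁, g₁⟩ _ ⟨w₂, i₂, g₂⟩ _ heq
        simp only [Prod.mk.injEq] at heq
        obtain ⟨hf, hi, hg⟩ := heq
        subst hi
        have : w₁ = w₂ := by
          have := congrArg (fun x => flipAt n x i₁) hf
          simpa [flipAt_flipAt] using this
        simp [this, hg])
    calc Q.card ≤ _ := this
      _ = S.ncard * (n * 2 ^ n) := by
          rw [card_product, card_product, card_univ, card_univ, hV,
            Fintype.card_fin, ← Set.ncard_eq_toFinset_card']
  -- (D) cardinalities
  have hsle : S.ncard ≤ 2 ^ n := by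
    rw [Set.ncard_eq_toFinset_card', ← hV]
    exact le_trans (card_le_card (subset_univ _)) (le_of_eq (card_univ))
  have hTcCard : Tc.card = 2 ^ n - S.ncard := by
    have : Tc = S.toFinsetᶜ := by ext v; simp [hTc]
    rw [this, card_compl, hV, Set.ncard_eq_toFinset_card']
  -- put it together
  have key : 2 ^ (n - 1) * Tc.card ≤ 2 ^ (n - 1) * (2 * (n * S.ncard)) := by
    calc 2 ^ (n - 1) * Tc.card ≤ Q.card := le_trans hA hB
      _ ≤ S.ncard * (n * 2 ^ n) := hC
      _ = 2 ^ (n - 1) * (2 * (n * S.ncard)) := by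
          have h2n : 2 ^ n = 2 ^ (n - 1) * 2 := by
            rw [← pow_succ]; congr 1; omega
          rw [h2n]; ring
  have hpos : 0 < 2 ^ (n - 1) := Nat.pow_pos (by norm_num)
  have hfin : Tc.card ≤ 2 * (n * S.ncard) := Nat.le_of_mul_le_mul_left key hpos
  rw [hTcCard] at hfin
  have : 2 * n * S.ncard = 2 * (n * S.ncard) := by ring
  omega

/-- If every connected component of `V \ S` has at most `2^{n-1}` vertices, then
`|S| ≥ (1/n²)(2^n − |S|)`; consequently if `|S| < 2^n/(n²+1)` then some component
of `V \ S` has more than `2^{n-1}` vertices. -/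
theorem stmt2 (n : ℕ) (S : Set (Fin n → Bool))
    (h : ∀ C : Set (Fin n → Bool), IsCompOf n Sᶜ C → (C.ncard : ℝ) ≤ 2 ^ n / 2) :
    (S.ncard : ℝ) ≥ (1 / n ^ 2) * (2 ^ n - S.ncard) ∧
      ((S.ncard : ℝ) < 2 ^ n / (n ^ 2 + 1) →
        ∃ C : Set (Fin n → Bool), IsCompOf n Sᶜ C ∧ (C.ncard : ℝ) > 2 ^ n / 2) := by
  have hpart1 : (S.ncard : ℝ) ≥ (1 / n ^ 2) * (2 ^ n - S.ncard) := by
    rcases Nat.eq_zero_or_pos n with rfl | hn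
    · norm_num
    · have hcomp : ∀ u, u ∉ S → (comp n S u).ncard ≤ 2 ^ (n - 1) := by
        intro u hu
        have hle := h (comp n S u) (comp_isCompOf hu)
        have h2 : (2:ℝ) ^ n / 2 = ((2 ^ (n - 1) : ℕ) : ℝ) := by
          have hpow : (2:ℝ) ^ n = 2 ^ (n - 1) * 2 := by
            rw [← pow_succ]
            congr 1
            omega
          rw [hpow]
          push_cast
          ring
        rw [h2, Nat.cast_le] at hle
        exact hle
      have hcount := count hn hcomp
      have h2 : 2 ^ n ≤ S.ncard + n ^ 2 * S.ncard := by
        rcases Nat.lt_or_ge n 2 with h1 | h1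
        · have hn1 : n = 1 := by omega
          subst hn1
          simp only [pow_one] at hcount ⊢
          omega
        · have hmul : 2 * n ≤ n ^ 2 := by nlinarith
          have := Nat.mul_le_mul_right S.ncard hmul
          omega
      have hR : (2:ℝ) ^ n ≤ S.ncard + (n:ℝ) ^ 2 * S.ncard := by exact_mod_cast h2
      have hn0 : (0:ℝ) < (n:ℝ) := by exact_mod_cast hn
      have hn2 : (0:ℝ) < (n:ℝ) ^ 2 := by positivity
      rw [ge_iff_le, one_div, inv_mul_eq_div, div_le_iff₀ hn2]
      linarith
  refine ⟨hpart1, ?_⟩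
  intro hlt
  exfalso
  rcases Nat.eq_zero_or_pos n with rfl | hn
  · have hS0 : S.ncard = 0 := by norm_num at hlt; exact hlt
    have hSempty : S = ∅ := (Set.ncard_eq_zero S.toFinite).1 hS0
    have hu : (fun _ => false : Fin 0 → Bool) ∉ S := by simp [hSempty]
    have hc := h _ (comp_isCompOf hu)
    have hpos : 0 < (comp 0 S (fun _ => false)).ncard :=
      (Set.ncard_pos (Set.toFinite _)).2 ⟨_, mem_comp_self hu⟩
    have h1 : (1:ℝ) ≤ (comp 0 S (fun _ => false)).ncard := by exact_mod_cast hpos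
    norm_num at hc
    linarith
  · have hn0 : (0:ℝ) < (n:ℝ) := by exact_mod_cast hn
    have hn2 : (0:ℝ) < (n:ℝ) ^ 2 := by positivity
    have hkey : (2:ℝ) ^ n - S.ncard ≤ S.ncard * (n:ℝ) ^ 2 := by
      rw [ge_iff_le, one_div, inv_mul_eq_div, div_le_iff₀ hn2] at hpart1
      exact hpart1
    rw [lt_div_iff₀ (by positivity)] at hlt
    linarith
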